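/- Let Z be a nonnegative real-valued random variable and X an exponential random variable with rate δ > 0, independent of Z, with P[Z > X] > 0. Then 1 + δ·E[Z − X | Z > X] = δ·E[Z] / P[Z > X]. -/

import Mathlib

open MeasureTheory ProbabilityTheory

open scoped ENNReal
open Real Set Filter Topology

lemma aux_expMeasure_Iio {δ : ℝ} (hδ : 0 < δ) (z : ℝ) :
    expMeasure δ (Set.Iio z) = ENNReal.ofReal (1 - Real.exp (-(δ * z))) := by
  have h : expMeasure δ (Set.Iio z) = ∫⁻ x in Set.Iio z, exponentialPDF δ x := by
    rw [expMeasure, gammaMeasure, withDensity_apply _ measurableSet_Iio]; rfl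
  rw [h, setLIntegral_congr (Iio_ae_eq_Iic (a := z) (μ := volume)),
    lintegral_exponentialPDF_eq_antiDeriv hδ z]
  split_ifs with hz
  · rfl
  · rw [ENNReal.ofReal_zero, eq_comm, ENNReal.ofReal_eq_zero]
    have : (1:ℝ) ≤ Real.exp (-(δ * z)) := by
      rw [Real.one_le_exp_iff]
      nlinarith
    linarith

lemma aux_cont {δ z : ℝ} : Continuous (fun x : ℝ => δ * Real.exp (-(δ * x)) * min z x) := by
  fun_prop

lemma aux_int1 {δ z : ℝ} : IntegrableOn (fun x : ℝ => δ * Real.exp (-(δ * x)) * min z x)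
    (Set.Ioc 0 z) := aux_cont.integrableOn_Ioc

lemma aux_int2 {δ : ℝ} (hδ : 0 < δ) (z : ℝ) :
    IntegrableOn (fun x : ℝ => δ * Real.exp (-(δ * x)) * min z x) (Set.Ioi z) := by
  have h : IntegrableOn (fun x : ℝ => δ * Real.exp (-(δ * x)) * z) (Set.Ioi z) := by
    have h2 := (exp_neg_integrableOn_Ioi z hδ).const_mul (δ * z)
    apply IntegrableOn.congr_fun h2 ?_ measurableSet_Ioi
    intro x _
    show δ * z * Real.exp (-δ * x) = _
    rw [neg_mul]
    ring
  apply IntegrableOn.congr_fun h ?_ measurableSet_Ioi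
  intro x hx
  simp only [Set.mem_Ioi] at hx
  show _ = _ * min z x
  rw [min_eq_left hx.le]

lemma aux_piece1 {δ : ℝ} (hδ : 0 < δ) {z : ℝ} (hz : 0 ≤ z) :
    ∫ x in Set.Ioc (0:ℝ) z, δ * Real.exp (-(δ * x)) * min z x
      = -z * Real.exp (-(δ * z)) - Real.exp (-(δ * z)) / δ + 1 / δ := by
  have hcongr : ∫ x in Set.Ioc (0:ℝ) z, δ * Real.exp (-(δ * x)) * min z x
      = ∫ x in Set.Ioc (0:ℝ) z, δ * Real.exp (-(δ * x)) * x := by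
    apply setIntegral_congr_fun measurableSet_Ioc
    intro x hx
    simp only [Set.mem_Ioc] at hx
    show _ * min z x = _
    rw [min_eq_right hx.2]
  rw [hcongr, ← intervalIntegral.integral_of_le hz]
  have hderiv : ∀ x ∈ Set.uIcc (0:ℝ) z,
      HasDerivAt (fun x : ℝ => -x * Real.exp (-(δ * x)) - Real.exp (-(δ * x)) / δ)
        (δ * Real.exp (-(δ * x)) * x) x := by
    intro x _
    have h1 : HasDerivAt (fun x : ℝ => Real.exp (-(δ * x))) (-δ * Real.exp (-(δ * x))) x := by
      have := ((hasDerivAt_id x).const_mul (-δ)).exp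
      simpa [neg_mul, mul_comm] using this
    have h2 : HasDerivAt (fun x : ℝ => -x * Real.exp (-(δ * x)))
        (-1 * Real.exp (-(δ * x)) + -x * (-δ * Real.exp (-(δ * x)))) x :=
      ((hasDerivAt_id x).neg).mul h1
    have h3 := h2.sub (h1.div_const δ)
    refine HasDerivAt.congr_deriv h3 ?_
    field_simp
    ring
  rw [intervalIntegral.integral_eq_sub_of_hasDerivAt hderiv
    ((by fun_prop : Continuous fun x : ℝ => δ * Real.exp (-(δ * x)) * x).intervalIntegrable 0 z)]
  simp [Real.exp_zero]

lemma aux_piece2 {δ : ℝ} (hδ : 0 < δ) {z : ℝ} (hz : 0 ≤ z) :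
    ∫ x in Set.Ioi z, δ * Real.exp (-(δ * x)) * min z x = z * Real.exp (-(δ * z)) := by
  have hcongr : ∫ x in Set.Ioi z, δ * Real.exp (-(δ * x)) * min z x
      = ∫ x in Set.Ioi z, δ * z * Real.exp (-(δ * x)) := by
    apply setIntegral_congr_fun measurableSet_Ioi
    intro x hx
    simp only [Set.mem_Ioi] at hx
    show _ * min z x = _
    rw [min_eq_left hx.le]
    ring
  rw [hcongr]
  have hderiv : ∀ x ∈ Set.Ioi z,
      HasDerivAt (fun x : ℝ => -z * Real.exp (-(δ * x))) (δ * z * Real.exp (-(δ * x))) x := by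
    intro x _
    have h1 : HasDerivAt (fun x : ℝ => Real.exp (-(δ * x))) (-δ * Real.exp (-(δ * x))) x := by
      have := ((hasDerivAt_id x).const_mul (-δ)).exp
      simpa [neg_mul, mul_comm] using this
    have := h1.const_mul (-z)
    refine HasDerivAt.congr_deriv this ?_
    ring
  have hcont : ContinuousWithinAt (fun x : ℝ => -z * Real.exp (-(δ * x))) (Set.Ici z) z :=
    Continuous.continuousWithinAt (by fun_prop)
  have hint : IntegrableOn (fun x : ℝ => δ * z * Real.exp (-(δ * x))) (Set.Ioi z) := by
    have h2 := (exp_neg_integrableOn_Ioi z hδ).const_mul (δ * z)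
    apply IntegrableOn.congr_fun h2 ?_ measurableSet_Ioi
    intro x _
    show δ * z * Real.exp (-δ * x) = _
    rw [neg_mul]
  have htend : Tendsto (fun x : ℝ => -z * Real.exp (-(δ * x))) atTop (𝓝 0) := by
    have : Tendsto (fun x : ℝ => Real.exp (-(δ * x))) atTop (𝓝 0) := by
      apply Real.tendsto_exp_atBot.comp
      exact tendsto_neg_atTop_atBot.comp (tendsto_id.const_mul_atTop hδ)
    have := this.const_mul (-z)
    simpa using this
  rw [MeasureTheory.integral_Ioi_of_hasDerivAt_of_tendsto hcont hderiv hint htend]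
  ring

lemma aux_real_int {δ : ℝ} (hδ : 0 < δ) {z : ℝ} (hz : 0 ≤ z) :
    ∫ x in Set.Ioi (0:ℝ), δ * Real.exp (-(δ * x)) * min z x
      = (1 - Real.exp (-(δ * z))) / δ := by
  rw [← Set.Ioc_union_Ioi_eq_Ioi hz,
    setIntegral_union (Set.Ioc_disjoint_Ioi le_rfl) measurableSet_Ioi aux_int1 (aux_int2 hδ z),
    aux_piece1 hδ hz, aux_piece2 hδ hz]
  field_simp
  ring

lemma aux_inner {δ : ℝ} (hδ : 0 < δ) {z : ℝ} (hz : 0 ≤ z) :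
    ∫⁻ x, ENNReal.ofReal (min z x) ∂(expMeasure δ)
      = ENNReal.ofReal ((1 - Real.exp (-(δ * z))) / δ) := by
  have hmeas : Measurable fun x : ℝ => ENNReal.ofReal (min z x) := by fun_prop
  have hpdf : Measurable (gammaPDF 1 δ) := (measurable_gammaPDFReal 1 δ).ennreal_ofReal
  rw [expMeasure, gammaMeasure, lintegral_withDensity_eq_lintegral_mul _ hpdf hmeas]
  have hsplit : ∫⁻ x, (gammaPDF 1 δ * fun x => ENNReal.ofReal (min z x)) x
      = ∫⁻ x in Set.Ici (0:ℝ), (gammaPDF 1 δ * fun x => ENNReal.ofReal (min z x)) x := by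
    rw [← lintegral_add_compl _ measurableSet_Ici (μ := volume)]
    have h0 : ∫⁻ x in (Set.Ici (0:ℝ))ᶜ, (gammaPDF 1 δ * fun x => ENNReal.ofReal (min z x)) x = 0 := by
      rw [Set.compl_Ici]
      rw [setLIntegral_congr_fun_ae measurableSet_Iio
        (ae_of_all _ (fun x (hx : x < 0) => by
          show gammaPDF 1 δ x * ENNReal.ofReal (min z x) = (0:ℝ≥0∞)
          rw [gammaPDF_of_neg hx, zero_mul])), lintegral_zero]
    rw [h0, add_zero]
  rw [hsplit]
  have heq : ∫⁻ x in Set.Ici (0:ℝ), (gammaPDF 1 δ * fun x => ENNReal.ofReal (min z x)) x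
      = ∫⁻ x in Set.Ici (0:ℝ), ENNReal.ofReal (δ * Real.exp (-(δ * x)) * min z x) := by
    apply setLIntegral_congr_fun_ae measurableSet_Ici
    apply ae_of_all
    intro x (hx : (0:ℝ) ≤ x)
    show gammaPDF 1 δ x * ENNReal.ofReal (min z x) = _
    rw [show gammaPDF 1 δ x = exponentialPDF δ x from rfl, exponentialPDF_of_nonneg hx,
      ← ENNReal.ofReal_mul (by positivity)]
  rw [heq, setLIntegral_congr (Ioi_ae_eq_Ici (a := (0:ℝ)) (μ := volume)).symm,
    ← ofReal_integral_eq_lintegral_ofReal, aux_real_int hδ hz]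
  · rw [← Set.Ioc_union_Ioi_eq_Ioi hz]
    exact IntegrableOn.union aux_int1 (aux_int2 hδ z)
  · rw [EventuallyLE, ae_restrict_iff' measurableSet_Ioi]
    apply ae_of_all
    intro x hx
    simp only [Set.mem_Ioi, Pi.zero_apply] at *
    have : (0:ℝ) ≤ min z x := le_min hz hx.le
    positivity

/-- For a nonnegative random variable `Z` with finite mean and an independent
exponential random variable `X` with rate `δ > 0`, if `P[Z > X] > 0` then
`1 + δ·E[Z − X | Z > X] = δ·E[Z] / P[Z > X]`. -/
theorem stmt_0 {Ω : Type*} [MeasureSpace Ω] [IsProbabilityMeasure (ℙ : Measure Ω)]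
    (δ : ℝ) (hδ : 0 < δ) (Z X : Ω → ℝ)
    (hZmeas : Measurable Z) (hXmeas : Measurable X)
    (hZnonneg : ∀ ω, 0 ≤ Z ω)
    (hZint : Integrable Z)
    (hX : Measure.map X ℙ = expMeasure δ)
    (hindep : IndepFun Z X)
    (hpos : 0 < (ℙ {ω | X ω < Z ω}).toReal) :
    1 + δ * ((∫ ω in {ω | X ω < Z ω}, (Z ω - X ω)) / (ℙ {ω | X ω < Z ω}).toReal)
      = δ * (∫ ω, Z ω) / (ℙ {ω | X ω < Z ω}).toReal := by
  haveI : IsProbabilityMeasure (expMeasure δ) := isProbabilityMeasure_expMeasure hδ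
  set A : Set Ω := {ω | X ω < Z ω} with hA
  have hAmeas : MeasurableSet A := measurableSet_lt hXmeas hZmeas
  set μ : Measure ℝ := Measure.map Z ℙ with hμ
  haveI : IsProbabilityMeasure μ := Measure.isProbabilityMeasure_map hZmeas.aemeasurable
  have hX0 : ∀ᵐ ω ∂(ℙ : Measure Ω), 0 ≤ X ω := by
    rw [ae_iff]
    have h1 : {ω | ¬ 0 ≤ X ω} = X ⁻¹' Set.Iio 0 := by ext ω; simp [not_le]
    rw [h1, ← Measure.map_apply hXmeas measurableSet_Iio, hX, aux_expMeasure_Iio hδ]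
    simp
  have hZ0μ : ∀ᵐ z ∂μ, 0 ≤ z := by
    rw [ae_iff]
    have h1 : {z : ℝ | ¬ 0 ≤ z} = Set.Iio 0 := by ext z; simp [not_le]
    rw [h1, hμ, Measure.map_apply hZmeas measurableSet_Iio]
    have h2 : Z ⁻¹' Set.Iio 0 = ∅ := by
      ext ω; simp [not_lt.mpr (hZnonneg ω)]
    rw [h2, measure_empty]
  have hmin_meas : Measurable fun ω => min (Z ω) (X ω) := hZmeas.min hXmeas
  have hmin_int : Integrable (fun ω => min (Z ω) (X ω)) ℙ := by
    apply hZint.mono hmin_meas.aestronglyMeasurable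
    filter_upwards [hX0] with ω hω
    rw [Real.norm_eq_abs, Real.norm_eq_abs, abs_of_nonneg (le_min (hZnonneg ω) hω),
      abs_of_nonneg (hZnonneg ω)]
    exact min_le_left _ _
  have hmin0 : ∀ᵐ ω ∂(ℙ : Measure Ω), 0 ≤ min (Z ω) (X ω) := by
    filter_upwards [hX0] with ω hω
    exact le_min (hZnonneg ω) hω
  have hjoint : Measure.map (fun ω => (Z ω, X ω)) ℙ = μ.prod (expMeasure δ) := by
    rw [← hX]
    exact (indepFun_iff_map_prod_eq_prod_map_map hZmeas.aemeasurable hXmeas.aemeasurable).mp hindep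
  have hPA : ℙ A = ∫⁻ z, ENNReal.ofReal (1 - Real.exp (-(δ * z))) ∂μ := by
    have h1 : ℙ A = Measure.map (fun ω => (Z ω, X ω)) ℙ {p : ℝ × ℝ | p.2 < p.1} := by
      rw [Measure.map_apply (hZmeas.prodMk hXmeas) (measurableSet_lt measurable_snd measurable_fst)]
      rfl
    rw [h1, hjoint, Measure.prod_apply (measurableSet_lt measurable_snd measurable_fst)]
    apply lintegral_congr
    intro z
    have h2 : (Prod.mk z ⁻¹' {p : ℝ × ℝ | p.2 < p.1}) = Set.Iio z := rfl
    rw [h2, aux_expMeasure_Iio hδ]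
  have hMin : ∫⁻ ω, ENNReal.ofReal (min (Z ω) (X ω)) ∂ℙ
      = ∫⁻ z, ENNReal.ofReal ((1 - Real.exp (-(δ * z))) / δ) ∂μ := by
    have h1 : ∫⁻ ω, ENNReal.ofReal (min (Z ω) (X ω)) ∂ℙ
        = ∫⁻ p : ℝ × ℝ, ENNReal.ofReal (min p.1 p.2) ∂(μ.prod (expMeasure δ)) := by
      rw [← hjoint, lintegral_map (by fun_prop) (hZmeas.prodMk hXmeas)]
    rw [h1, lintegral_prod _ (by fun_prop : Measurable fun p : ℝ × ℝ => ENNReal.ofReal (min p.1 p.2)).aemeasurable]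
    apply lintegral_congr_ae
    filter_upwards [hZ0μ] with z hz
    exact aux_inner hδ hz
  have hPA2 : ℙ A = ENNReal.ofReal δ * ∫⁻ ω, ENNReal.ofReal (min (Z ω) (X ω)) ∂ℙ := by
    rw [hMin, hPA, ← lintegral_const_mul _ (by fun_prop)]
    apply lintegral_congr
    intro z
    rw [← ENNReal.ofReal_mul hδ.le, mul_div_cancel₀ _ hδ.ne']
  have hIntMin : ∫ ω, min (Z ω) (X ω)
      = (∫⁻ ω, ENNReal.ofReal (min (Z ω) (X ω)) ∂ℙ).toReal := by
    rw [integral_eq_lintegral_of_nonneg_ae hmin0 hmin_meas.aestronglyMeasurable]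
  have hLfin : (∫⁻ ω, ENNReal.ofReal (min (Z ω) (X ω)) ∂ℙ) ≠ ⊤ := by
    intro h
    have h2 : ℙ A ≠ ⊤ := measure_ne_top _ _
    rw [hPA2, h, ENNReal.mul_top (ENNReal.ofReal_pos.mpr hδ).ne'] at h2
    exact h2 rfl
  have hkey : (ℙ A).toReal = δ * ∫ ω, min (Z ω) (X ω) := by
    rw [hIntMin, hPA2, ENNReal.toReal_mul, ENNReal.toReal_ofReal hδ.le]
  have hI : ∫ ω in A, (Z ω - X ω) = (∫ ω, Z ω) - ∫ ω, min (Z ω) (X ω) := by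
    rw [← integral_sub hZint hmin_int, ← integral_indicator hAmeas]
    apply integral_congr_ae
    apply ae_of_all
    intro ω
    by_cases h : ω ∈ A
    · rw [Set.indicator_of_mem h]
      have hlt : X ω < Z ω := h
      show _ = Z ω - min (Z ω) (X ω)
      rw [min_eq_right hlt.le]
    · rw [Set.indicator_of_notMem h]
      have hle : Z ω ≤ X ω := not_lt.mp h
      show _ = Z ω - min (Z ω) (X ω)
      rw [min_eq_left hle, sub_self]
  rw [hI]
  have hp : (ℙ A).toReal ≠ 0 := ne_of_gt hpos
  field_simp
  linarith [hkey, mul_pos hδ hpos]
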